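/- Signature equivalence is an equivalence relation: for smooth maps u₁ : M₁ → N and u₂ : M₂ → N, say u₁ ~ u₂ if there exist a space C, a continuous U : C → N, and continuous surjections φ₁ : M₁ → C, φ₂ : M₂ → C with u₁ = U ∘ φ₁ and u₂ = U ∘ φ₂. Then ~ is reflexive, symmetric, and transitive (in the topological category, where transitivity is witnessed by an appropriate quotient/pushout construction). -/

import Mathlib

universe u

/-- Two continuous maps into `N` (with possibly different domains) are signature
equivalent if they factor through a common phase space `C` via continuous surjections. -/
def SigEquiv {N : Type u} [TopologicalSpace N]
    (A B : Σ M : TopCat.{u}, C(M, N)) : Prop :=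
  ∃ (C : TopCat.{u}) (U : C(C, N)) (φ₁ : C(A.1, C)) (φ₂ : C(B.1, C)),
    Function.Surjective φ₁ ∧ Function.Surjective φ₂ ∧
    (∀ x, A.2 x = U (φ₁ x)) ∧ (∀ x, B.2 x = U (φ₂ x))

/-- Signature equivalence is an equivalence relation (reflexive, symmetric and
transitive). -/
theorem sigEquiv_equivalence {N : Type u} [TopologicalSpace N] :
    Equivalence (@SigEquiv N _) := by
  constructor
  · intro A
    exact ⟨A.1, A.2, ContinuousMap.id _, ContinuousMap.id _,
      Function.surjective_id, Function.surjective_id, fun _ => rfl, fun _ => rfl⟩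
  · rintro A B ⟨C, U, φ₁, φ₂, h₁, h₂, e₁, e₂⟩
    exact ⟨C, U, φ₂, φ₁, h₂, h₁, e₂, e₁⟩
  · rintro A B C ⟨P, U, φ₁, φ₂, hφ₁, hφ₂, eφ₁, eφ₂⟩ ⟨Q, V, ψ₂, ψ₃, hψ₂, hψ₃, eψ₂, eψ₃⟩
    -- glue `P` and `Q` along `B` : pushout of `P ← B.1 → Q`
    let r : (↑P ⊕ ↑Q) → (↑P ⊕ ↑Q) → Prop :=
      fun a b => ∃ x : B.1, a = Sum.inl (φ₂ x) ∧ b = Sum.inr (ψ₂ x)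
    let R : TopCat.{u} := TopCat.of (Quot r)
    have hlift : ∀ a b, r a b → Sum.elim (⇑U) (⇑V) a = Sum.elim (⇑U) (⇑V) b := by
      rintro a b ⟨x, rfl, rfl⟩
      simp [← eφ₂ x, ← eψ₂ x]
    let W : C(R, N) := ⟨Quot.lift (Sum.elim (⇑U) (⇑V)) hlift,
      continuous_quot_lift hlift (U.continuous.sumElim V.continuous)⟩
    let Φ : C(A.1, R) := ⟨fun m => Quot.mk r (Sum.inl (φ₁ m)),
      continuous_quot_mk.comp (continuous_inl.comp φ₁.continuous)⟩
    let Ψ : C(C.1, R) := ⟨fun m => Quot.mk r (Sum.inr (ψ₃ m)),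
      continuous_quot_mk.comp (continuous_inr.comp ψ₃.continuous)⟩
    have key : ∀ x : B.1, Quot.mk r (Sum.inl (φ₂ x)) = Quot.mk r (Sum.inr (ψ₂ x)) :=
      fun x => Quot.sound ⟨x, rfl, rfl⟩
    refine ⟨R, W, Φ, Ψ, ?_, ?_, fun x => eφ₁ x, fun x => eψ₃ x⟩
    · intro q
      induction q using Quot.ind with
      | _ a =>
        cases a with
        | inl p =>
          obtain ⟨m, rfl⟩ := hφ₁ p
          exact ⟨m, rfl⟩
        | inr q =>
          obtain ⟨x, rfl⟩ := hψ₂ q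
          obtain ⟨m, hm⟩ := hφ₁ (φ₂ x)
          exact ⟨m, by simp [Φ, hm, key x]⟩
    · intro q
      induction q using Quot.ind with
      | _ a =>
        cases a with
        | inr q =>
          obtain ⟨m, rfl⟩ := hψ₃ q
          exact ⟨m, rfl⟩
        | inl p =>
          obtain ⟨x, rfl⟩ := hφ₂ p
          obtain ⟨m, hm⟩ := hψ₃ (ψ₂ x)
          exact ⟨m, by simp [Ψ, hm, ← key x]⟩
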